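/- arXiv:2106.14592 — 6 statements merged into one kernel-verified Lean document; each statement's English description precedes it below -/
import Mathlib

section
/- Let A, R, S be real r×r matrices and suppose P∞ is a positive definite solution and P∞⁻ is a negative definite solution of the algebraic Riccati equation AP + PAᵀ + R − PSP = 0, with (A − P∞S) Hurwitz. Define the Gramian Δ∞ = ∫₀^∞ exp(s(A − P∞S)ᵀ) S exp(s(A − P∞S)) ds and assume Δ∞ is positive definite and invertible. Then Tr(S P∞) = 2 Tr(A) − Tr(S P∞⁻), provided P∞ − P∞⁻ = Δ∞⁻¹. -/
open Matrix Real MeasureTheory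

/-- A real square matrix is Hurwitz if all its (complex) eigenvalues have
negative real part. -/
def IsHurwitz {r : ℕ} (M : Matrix (Fin r) (Fin r) ℝ) : Prop :=
  ∀ μ ∈ spectrum ℂ (M.map (algebraMap ℝ ℂ)), μ.re < 0

/-- `Tr(S P∞) = 2 Tr(A) − Tr(S P∞⁻)` given the Gramian fixed point
formula `P∞ − P∞⁻ = Δ∞⁻¹`. -/
theorem trace_identity_gramian {r : ℕ} (A R S Pp Pm : Matrix (Fin r) (Fin r) ℝ)
    (hPp : Pp.PosDef) (hPm : (-Pm).PosDef)
    (hRiccPp : A * Pp + Pp * Aᵀ + R - Pp * S * Pp = 0)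
    (hRiccPm : A * Pm + Pm * Aᵀ + R - Pm * S * Pm = 0)
    (hHur : IsHurwitz (A - Pp * S))
    (Δ : Matrix (Fin r) (Fin r) ℝ)
    (hΔdef : Δ = Matrix.of fun i j =>
      ∫ s in Set.Ioi (0 : ℝ),
        (NormedSpace.exp (s • (A - Pp * S)ᵀ) * S * NormedSpace.exp (s • (A - Pp * S))) i j)
    (hΔpos : Δ.PosDef) (hΔinv : IsUnit Δ)
    (hfix : Pp - Pm = Δ⁻¹) :
    (S * Pp).trace = 2 * A.trace - (S * Pm).trace := by
  have hdet : IsUnit Δ.det := (Matrix.isUnit_iff_isUnit_det Δ).mp hΔinv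
  have h1 : (A - Pp * S) * (Pp - Pm) + (Pp - Pm) * (Aᵀ - S * Pm) =
      (A * Pp + Pp * Aᵀ + R - Pp * S * Pp) - (A * Pm + Pm * Aᵀ + R - Pm * S * Pm) := by
    noncomm_ring
  rw [hRiccPp, hRiccPm, sub_self, hfix] at h1
  -- multiply on the right by Δ
  have h2 : (A - Pp * S) + Δ⁻¹ * (Aᵀ - S * Pm) * Δ = 0 := by
    have := congrArg (· * Δ) h1
    simpa [add_mul, mul_assoc, Matrix.nonsing_inv_mul Δ hdet, zero_mul] using this
  have h3 : (A - Pp * S).trace = -((Aᵀ - S * Pm).trace) := by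
    have h4 : (A - Pp * S) = -(Δ⁻¹ * (Aᵀ - S * Pm) * Δ) := by
      linear_combination (norm := noncomm_ring) h2
    rw [h4, Matrix.trace_neg, Matrix.trace_mul_cycle,
      Matrix.mul_nonsing_inv Δ hdet, one_mul]
  have hTp : (Pp * S).trace = (S * Pp).trace := Matrix.trace_mul_comm _ _
  have hTA : Aᵀ.trace = A.trace := Matrix.trace_transpose A
  rw [Matrix.trace_sub, Matrix.trace_sub, hTp, hTA] at h3
  linarith
end

section
/- Let A, R, S be real r×r matrices, P∞ a positive definite solution and P∞⁻ a negative definite solution of the algebraic Riccati equation AP + PAᵀ + R − PSP = 0. Then Tr(S P∞) = Tr(Q∞ R), where Q∞ := −(P∞⁻)⁻¹. -/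
open Matrix

/-- `Tr(S P∞) = Tr(Q∞ R)` with `Q∞ = −(P∞⁻)⁻¹`. -/
theorem trace_SP_eq_trace_QR {r : ℕ} (A R S Pp Pm : Matrix (Fin r) (Fin r) ℝ)
    (hPp : Pp.PosDef) (hPm : (-Pm).PosDef)
    (hRiccPp : A * Pp + Pp * Aᵀ + R - Pp * S * Pp = 0)
    (hRiccPm : A * Pm + Pm * Aᵀ + R - Pm * S * Pm = 0) :
    (S * Pp).trace = (-(Pm⁻¹) * R).trace := by
  -- Pm is invertible
  have hPmU : IsUnit Pm := by
    have h1 : IsUnit (-Pm) := (Matrix.isUnit_iff_isUnit_det _).mpr hPm.det_pos.ne'.isUnit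
    simpa using h1.neg
  have hPmdet : IsUnit Pm.det := (Matrix.isUnit_iff_isUnit_det _).mp hPmU
  -- D := Pp - Pm is positive definite, hence invertible
  set D : Matrix (Fin r) (Fin r) ℝ := Pp - Pm with hD
  have hDpd : D.PosDef := by
    have := hPp.add hPm
    simpa [hD, sub_eq_add_neg] using this
  have hDdet : IsUnit D.det := (Matrix.isUnit_iff_isUnit_det _).mp
    ((Matrix.isUnit_iff_isUnit_det _).mpr hDpd.det_pos.ne'.isUnit)
  -- Identity from the Pm Riccati equation
  have hPmEq : Pm * S * Pm = A * Pm + Pm * Aᵀ + R := (sub_eq_zero.mp hRiccPm).symm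
  have h1 : (S * Pm).trace = 2 * A.trace + (Pm⁻¹ * R).trace := by
    have e : Pm⁻¹ * (Pm * S * Pm) = Pm⁻¹ * (A * Pm + Pm * Aᵀ + R) := by rw [hPmEq]
    have lhs : Pm⁻¹ * (Pm * S * Pm) = S * Pm := by
      rw [mul_assoc Pm S Pm, ← mul_assoc, Matrix.nonsing_inv_mul _ hPmdet, one_mul]
    have e2 := congrArg Matrix.trace e
    rw [lhs, mul_add, mul_add, trace_add, trace_add] at e2
    have t1 : (Pm⁻¹ * (A * Pm)).trace = A.trace := by
      rw [trace_mul_comm, mul_assoc, Matrix.mul_nonsing_inv _ hPmdet, mul_one]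
    have t2 : (Pm⁻¹ * (Pm * Aᵀ)).trace = A.trace := by
      rw [← mul_assoc, Matrix.nonsing_inv_mul _ hPmdet, one_mul, trace_transpose]
    rw [t1, t2] at e2
    rw [e2]; ring
  -- Identity from subtracting the two Riccati equations
  have hPpEq : Pp * S * Pp = A * Pp + Pp * Aᵀ + R := (sub_eq_zero.mp hRiccPp).symm
  have hDEq : A * D + D * Aᵀ = Pp * S * D + D * S * Pm := by
    have step1 : A * D + D * Aᵀ = Pp * S * Pp - Pm * S * Pm := by
      rw [hPpEq, hPmEq]; simp only [hD]; noncomm_ring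
    rw [step1]; simp only [hD]; noncomm_ring
  have h2 : 2 * A.trace = (S * Pp).trace + (S * Pm).trace := by
    have e : D⁻¹ * (A * D + D * Aᵀ) = D⁻¹ * (Pp * S * D + D * S * Pm) := by rw [hDEq]
    have e2 := congrArg Matrix.trace e
    rw [mul_add, mul_add, trace_add, trace_add] at e2
    have t1 : (D⁻¹ * (A * D)).trace = A.trace := by
      rw [trace_mul_comm, mul_assoc, Matrix.mul_nonsing_inv _ hDdet, mul_one]
    have t2 : (D⁻¹ * (D * Aᵀ)).trace = A.trace := by
      rw [← mul_assoc, Matrix.nonsing_inv_mul _ hDdet, one_mul, trace_transpose]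
    have t3 : (D⁻¹ * (Pp * S * D)).trace = (S * Pp).trace := by
      rw [trace_mul_comm, mul_assoc (Pp * S) D D⁻¹, Matrix.mul_nonsing_inv _ hDdet,
        mul_one, trace_mul_comm]
    have t4 : (D⁻¹ * (D * S * Pm)).trace = (S * Pm).trace := by
      rw [mul_assoc D S Pm, ← mul_assoc, Matrix.nonsing_inv_mul _ hDdet, one_mul]
    rw [t1, t2, t3, t4] at e2
    linarith
  rw [neg_mul, trace_neg]
  linarith
end

section
/- Let A, R be real r×r matrices with R positive definite and AR = RAᵀ, and let S be positive semi-definite. Then A² + RS = R(AᵀR⁻¹A + S) and A² + RS = R((Aᵀ)² + SR)R⁻¹; in particular A² + RS is similar to the product of the positive definite matrix R and the positive semi-definite matrix AᵀR⁻¹A + S, hence all eigenvalues of A² + RS are real and non-negative. -/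
open Matrix
open scoped ComplexOrder
open scoped MatrixOrder

lemma psd_map_complex {n : Type*} [Fintype n] [DecidableEq n] {N : Matrix n n ℝ}
    (hN : N.PosSemidef) : (N.map (algebraMap ℝ ℂ)).PosSemidef := by
  have h := CFC.sqrt_mul_sqrt_self N hN.nonneg
  have hherm : (CFC.sqrt N)ᴴ = CFC.sqrt N := (CFC.sqrt_nonneg N).posSemidef.1
  have : N.map (algebraMap ℝ ℂ) =
      ((CFC.sqrt N).map (algebraMap ℝ ℂ))ᴴ * ((CFC.sqrt N).map (algebraMap ℝ ℂ)) := by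
    rw [← Matrix.conjTranspose_map _ (fun x => by simp),
      hherm, ← Matrix.map_mul, h]
  rw [this]
  exact posSemidef_conjTranspose_mul_self _

lemma psd_spectrum_complex {n : Type*} [Fintype n] [DecidableEq n] {N : Matrix n n ℂ}
    (hN : N.PosSemidef) {μ : ℂ} (hμ : μ ∈ spectrum ℂ N) : μ.im = 0 ∧ 0 ≤ μ.re := by
  rw [hN.1.spectral_theorem, Unitary.conjStarAlgAut_apply, Unitary.spectrum_star_right_conjugate, spectrum_diagonal] at hμ
  obtain ⟨i, hi⟩ := hμ
  have := hN.eigenvalues_nonneg i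
  simp only [Function.comp] at hi
  subst hi
  simpa using this

/-- under the reversibility condition `AR = RAᵀ` with `R ≻ 0` and
`S ⪰ 0`, we have `A² + RS = R(AᵀR⁻¹A + S) = R((Aᵀ)² + SR)R⁻¹`, and all the
(complex) eigenvalues of `A² + RS` are real and non-negative. -/
theorem A_sq_add_RS_eigenvalues {r : ℕ} (A R S : Matrix (Fin r) (Fin r) ℝ)
    (hR : R.PosDef) (hrev : A * R = R * Aᵀ) (hS : S.PosSemidef) :
    A ^ 2 + R * S = R * (Aᵀ * R⁻¹ * A + S) ∧
    A ^ 2 + R * S = R * ((Aᵀ) ^ 2 + S * R) * R⁻¹ ∧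
    ∀ μ ∈ spectrum ℂ ((A ^ 2 + R * S).map (algebraMap ℝ ℂ)), μ.im = 0 ∧ 0 ≤ μ.re := by
  have hRinv : R * R⁻¹ = 1 := mul_nonsing_inv R (isUnit_iff_isUnit_det R |>.1 hR.isUnit)
  have eq1 : A ^ 2 + R * S = R * (Aᵀ * R⁻¹ * A + S) := by
    rw [mul_add]
    congr 1
    symm
    calc R * (Aᵀ * R⁻¹ * A) = (R * Aᵀ) * R⁻¹ * A := by rw [← mul_assoc, ← mul_assoc]
    _ = A * (R * R⁻¹) * A := by rw [← hrev, mul_assoc A R R⁻¹]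
    _ = A ^ 2 := by rw [hRinv, mul_one, pow_two]
  have hRA2 : R * (Aᵀ) ^ 2 = A ^ 2 * R := by
    rw [pow_two, ← mul_assoc, ← hrev, mul_assoc, ← hrev, ← mul_assoc, ← pow_two]
  have eq2 : A ^ 2 + R * S = R * ((Aᵀ) ^ 2 + S * R) * R⁻¹ := by
    rw [mul_add, add_mul, hRA2, mul_assoc (A ^ 2) R R⁻¹, hRinv, mul_one,
      ← mul_assoc R S R, mul_assoc (R * S) R R⁻¹, hRinv, mul_one]
  refine ⟨eq1, eq2, ?_⟩
  -- spectrum part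
  set M : Matrix (Fin r) (Fin r) ℝ := Aᵀ * R⁻¹ * A + S with hM
  have hMpsd : M.PosSemidef := by
    apply Matrix.PosSemidef.add _ hS
    have := (hR.inv).posSemidef.conjTranspose_mul_mul_same A
    simpa [conjTranspose_eq_transpose_of_trivial, mul_assoc] using this
  set Q := CFC.sqrt R with hQ
  have hQQ : Q * Q = R := CFC.sqrt_mul_sqrt_self R hR.posSemidef.nonneg
  have hQherm : Qᴴ = Q := (CFC.sqrt_nonneg R).posSemidef.1
  have hKpsd : (Q * M * Q).PosSemidef := by
    have := hMpsd.mul_mul_conjTranspose_same Q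
    rwa [hQherm] at this
  intro μ hμ
  have hsplit : (A ^ 2 + R * S).map (algebraMap ℝ ℂ) =
      Q.map (algebraMap ℝ ℂ) * (Q * M).map (algebraMap ℝ ℂ) := by
    rw [← Matrix.map_mul, ← mul_assoc, hQQ, ← eq1]
  rw [hsplit] at hμ
  by_cases h0 : μ = 0
  · simp [h0]
  · have : μ ∈ spectrum ℂ (Q.map (algebraMap ℝ ℂ) * (Q * M).map (algebraMap ℝ ℂ)) \ {0} :=
      ⟨hμ, h0⟩
    rw [spectrum.nonzero_mul_comm] at this
    have hμ' : μ ∈ spectrum ℂ ((Q * M * Q).map (algebraMap ℝ ℂ)) := by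
      have heq : (Q * M).map (algebraMap ℝ ℂ) * Q.map (algebraMap ℝ ℂ) =
          (Q * M * Q).map (algebraMap ℝ ℂ) := by rw [← Matrix.map_mul]
      rw [← heq]
      exact this.1
    exact psd_spectrum_complex (psd_map_complex hKpsd) hμ'
end

section
/- Let A, R, S be real r×r matrices with R positive definite, AR = RAᵀ, and S positive semi-definite such that A² + RS has a square root M = (A² + RS)^{1/2} with all eigenvalues positive. Define Q∞ = R⁻¹A + R⁻¹M. Then Q∞ satisfies the algebraic Riccati equation AᵀQ∞ + Q∞A − Q∞RQ∞ + S = 0, and A − RQ∞ = −M. -/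
open Matrix

/-- in the reversible case, `Q∞ = R⁻¹A + R⁻¹(A² + RS)^{1/2}`
solves the algebraic Riccati equation `AᵀQ∞ + Q∞A − Q∞RQ∞ + S = 0`, and
`A − RQ∞ = −(A² + RS)^{1/2}`. -/
theorem reversible_riccati_solution {r : ℕ} (A R S M : Matrix (Fin r) (Fin r) ℝ)
    (hR : R.PosDef) (hrev : A * R = R * Aᵀ) (hS : S.PosSemidef)
    (hM : M * M = A ^ 2 + R * S)
    (hMspec : ∀ μ ∈ spectrum ℂ (M.map (algebraMap ℝ ℂ)), μ.im = 0 ∧ 0 < μ.re) :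
    Aᵀ * (R⁻¹ * A + R⁻¹ * M) + (R⁻¹ * A + R⁻¹ * M) * A
        - (R⁻¹ * A + R⁻¹ * M) * R * (R⁻¹ * A + R⁻¹ * M) + S = 0 ∧
    A - R * (R⁻¹ * A + R⁻¹ * M) = -M := by
  have hdet : IsUnit R.det := isUnit_iff_ne_zero.mpr hR.det_pos.ne'
  have h1 : R * R⁻¹ = 1 := Matrix.mul_nonsing_inv R hdet
  have h2 : R⁻¹ * R = 1 := Matrix.nonsing_inv_mul R hdet
  have hRRi : ∀ X : Matrix (Fin r) (Fin r) ℝ, R * (R⁻¹ * X) = X := fun X => by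
    rw [← mul_assoc, h1, one_mul]
  have hRiR : ∀ X : Matrix (Fin r) (Fin r) ℝ, R⁻¹ * (R * X) = X := fun X => by
    rw [← mul_assoc, h2, one_mul]
  have hT : Aᵀ = R⁻¹ * (A * R) := by rw [hrev, hRiR]
  have hMM : R⁻¹ * (M * M) = R⁻¹ * (A * A) + S := by
    rw [hM, pow_two, mul_add, hRiR]
  constructor
  · rw [hT]
    simp only [mul_add, add_mul, mul_assoc, hRRi, hRiR]
    rw [hMM]; abel
  · rw [mul_add, hRRi, hRRi]
    abel
end

section
/- Let P and Q be real symmetric positive definite r×r matrices with principal square roots P^{1/2}, Q^{1/2}. Then ‖P^{1/2} − Q^{1/2}‖ ≤ ‖P − Q‖ / (λ_min(P)^{1/2} + λ_min(Q)^{1/2}), where ‖·‖ is the spectral norm and λ_min denotes the smallest eigenvalue. -/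
open Matrix
open scoped Matrix.Norms.L2Operator
open scoped RealInnerProductSpace

set_option linter.unusedSectionVars false

variable {n : Type*} [Fintype n] [DecidableEq n]

private lemma sym_inner {M : Matrix n n ℝ} (hM : M.IsHermitian)
    (x y : EuclideanSpace ℝ n) :
    ⟪(toEuclideanCLM (𝕜 := ℝ) M) x, y⟫ = ⟪x, (toEuclideanCLM (𝕜 := ℝ) M) y⟫ := by
  have h := (Matrix.isHermitian_iff_isSymmetric.mp hM) x y
  simpa [← Matrix.coe_toEuclideanCLM_eq_toEuclideanLin] using h

private lemma clm_eigen {M : Matrix n n ℝ} (hM : M.IsHermitian) (i : n) :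
    (toEuclideanCLM (𝕜 := ℝ) M) (hM.eigenvectorBasis i) =
      hM.eigenvalues i • hM.eigenvectorBasis i := by
  have h := hM.mulVec_eigenvectorBasis i
  apply (WithLp.equiv 2 (n → ℝ)).injective
  simpa using h

private lemma repr_clm {M : Matrix n n ℝ} (hM : M.IsHermitian)
    (v : EuclideanSpace ℝ n) (i : n) :
    hM.eigenvectorBasis.repr ((toEuclideanCLM (𝕜 := ℝ) M) v) i =
      hM.eigenvalues i * hM.eigenvectorBasis.repr v i := by
  rw [OrthonormalBasis.repr_apply_apply, OrthonormalBasis.repr_apply_apply,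
    ← sym_inner hM, clm_eigen hM, real_inner_smul_left]

private lemma inner_clm {M : Matrix n n ℝ} (hM : M.IsHermitian)
    (v : EuclideanSpace ℝ n) :
    ⟪v, (toEuclideanCLM (𝕜 := ℝ) M) v⟫ =
      ∑ i, hM.eigenvalues i * (hM.eigenvectorBasis.repr v i) ^ 2 := by
  rw [← hM.eigenvectorBasis.repr.inner_map_map v ((toEuclideanCLM (𝕜 := ℝ) M) v)]
  rw [PiLp.inner_apply]
  refine Finset.sum_congr rfl fun i _ => ?_
  rw [repr_clm hM]
  simp [RCLike.inner_apply]
  ring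

private lemma norm_sq_repr (B : OrthonormalBasis n ℝ (EuclideanSpace ℝ n))
    (v : EuclideanSpace ℝ n) : ‖v‖ ^ 2 = ∑ i, (B.repr v i) ^ 2 := by
  rw [← real_inner_self_eq_norm_sq, ← B.repr.inner_map_map v v, PiLp.inner_apply]
  refine Finset.sum_congr rfl fun i _ => ?_
  simp [RCLike.inner_apply]

private lemma rayleigh_lower {M : Matrix n n ℝ} (hM : M.IsHermitian)
    (v : EuclideanSpace ℝ n) :
    (⨅ i, hM.eigenvalues i) * ‖v‖ ^ 2 ≤ ⟪v, (toEuclideanCLM (𝕜 := ℝ) M) v⟫ := by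
  cases isEmpty_or_nonempty n
  · simp [inner_clm hM v, Real.iInf_of_isEmpty, Subsingleton.elim v 0]
  rw [inner_clm hM v, norm_sq_repr hM.eigenvectorBasis v, Finset.mul_sum]
  refine Finset.sum_le_sum fun i _ => ?_
  exact mul_le_mul_of_nonneg_right
    (ciInf_le (Finite.bddBelow_range _) i) (sq_nonneg _)

private lemma norm_le_of_eigen {M : Matrix n n ℝ} (hM : M.IsHermitian)
    {C : ℝ} (hC : 0 ≤ C) (h : ∀ i, |hM.eigenvalues i| ≤ C) : ‖M‖ ≤ C := by
  rw [Matrix.cstar_norm_def]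
  refine ContinuousLinearMap.opNorm_le_bound _ hC fun v => ?_
  have h1 : ‖(toEuclideanCLM (𝕜 := ℝ) M) v‖ ^ 2 ≤ (C * ‖v‖) ^ 2 := by
    rw [norm_sq_repr hM.eigenvectorBasis, mul_pow, norm_sq_repr hM.eigenvectorBasis v,
      Finset.mul_sum]
    refine Finset.sum_le_sum fun i _ => ?_
    rw [repr_clm hM, mul_pow]
    refine mul_le_mul_of_nonneg_right ?_ (sq_nonneg _)
    calc hM.eigenvalues i ^ 2 = |hM.eigenvalues i| ^ 2 := (sq_abs _).symm
    _ ≤ C ^ 2 := pow_le_pow_left₀ (abs_nonneg _) (h i) 2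
  have := Real.sqrt_le_sqrt h1
  rwa [Real.sqrt_sq (norm_nonneg _), Real.sqrt_sq (by positivity)] at this

private lemma sqrt_min_le [Nonempty n] {S M : Matrix n n ℝ}
    (hM : M.PosDef) (hS : S.PosDef) (hS2 : S * S = M)
    (v : EuclideanSpace ℝ n) (hv : ‖v‖ = 1) :
    Real.sqrt (⨅ i, hM.1.eigenvalues i) ≤ ⟪v, (toEuclideanCLM (𝕜 := ℝ) S) v⟫ := by
  have key : ∀ k, Real.sqrt (⨅ i, hM.1.eigenvalues i) ≤ hS.1.eigenvalues k := by
    intro k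
    set μ := hS.1.eigenvalues k with hμ
    set u := hS.1.eigenvectorBasis k with hu
    have hun : ‖u‖ = 1 := hS.1.eigenvectorBasis.orthonormal.1 k
    have hMu : ⟪u, (toEuclideanCLM (𝕜 := ℝ) M) u⟫ = μ ^ 2 := by
      rw [← hS2, _root_.map_mul, ContinuousLinearMap.mul_apply, clm_eigen hS.1, _root_.map_smul,
        clm_eigen hS.1, real_inner_smul_right, real_inner_smul_right,
        real_inner_self_eq_norm_sq, hun]
      ring
    have h1 : (⨅ i, hM.1.eigenvalues i) ≤ μ ^ 2 := by
      have := rayleigh_lower hM.1 u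
      rwa [hun, hMu, one_pow, mul_one] at this
    calc Real.sqrt (⨅ i, hM.1.eigenvalues i) ≤ Real.sqrt (μ ^ 2) := Real.sqrt_le_sqrt h1
    _ = |μ| := Real.sqrt_sq_eq_abs μ
    _ = μ := abs_of_pos (hS.eigenvalues_pos k)
  calc Real.sqrt (⨅ i, hM.1.eigenvalues i) ≤ ⨅ k, hS.1.eigenvalues k := le_ciInf key
  _ ≤ ⟪v, (toEuclideanCLM (𝕜 := ℝ) S) v⟫ := by
      have := rayleigh_lower hS.1 v
      rwa [hv, one_pow, mul_one] at this


/-- Ando–van Hemmen: for positive definite `P, Q` with principal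
square roots `P^{1/2}, Q^{1/2}`, one has
`‖P^{1/2} − Q^{1/2}‖ ≤ ‖P − Q‖/(λ_min(P)^{1/2} + λ_min(Q)^{1/2})` in spectral norm. -/
theorem ando_van_hemmen {r : ℕ} [NeZero r]
    (P Q sP sQ : Matrix (Fin r) (Fin r) ℝ)
    (hP : P.PosDef) (hQ : Q.PosDef)
    (hsP : sP.PosDef) (hsQ : sQ.PosDef)
    (hsP2 : sP * sP = P) (hsQ2 : sQ * sQ = Q) :
    ‖sP - sQ‖ ≤ ‖P - Q‖ /
      (Real.sqrt (⨅ i, hP.1.eigenvalues i) + Real.sqrt (⨅ i, hQ.1.eigenvalues i)) := by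
  have hNe : Nonempty (Fin r) := Fin.pos_iff_nonempty.mp (NeZero.pos r)
  set a := Real.sqrt (⨅ i, hP.1.eigenvalues i) with ha_def
  set b := Real.sqrt (⨅ i, hQ.1.eigenvalues i) with hb_def
  have hPmin : 0 < ⨅ i, hP.1.eigenvalues i := by
    obtain ⟨i0, hi0⟩ := Finite.exists_min hP.1.eigenvalues
    exact lt_of_lt_of_le (hP.eigenvalues_pos i0) (le_ciInf hi0)
  have hQmin : 0 < ⨅ i, hQ.1.eigenvalues i := by
    obtain ⟨i0, hi0⟩ := Finite.exists_min hQ.1.eigenvalues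
    exact lt_of_lt_of_le (hQ.eigenvalues_pos i0) (le_ciInf hi0)
  have ha : 0 < a := Real.sqrt_pos.mpr hPmin
  have hb : 0 < b := Real.sqrt_pos.mpr hQmin
  have hab : 0 < a + b := by linarith
  rw [le_div_iff₀ hab]
  set X := sP - sQ with hX_def
  have hX : X.IsHermitian := hsP.1.sub hsQ.1
  obtain ⟨j, hj⟩ := Finite.exists_max (fun i => |hX.eigenvalues i|)
  set lam := hX.eigenvalues j with hlam_def
  set v := hX.eigenvectorBasis j with hv_def
  have hv : ‖v‖ = 1 := hX.eigenvectorBasis.orthonormal.1 j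
  have hXnorm : ‖X‖ ≤ |lam| := norm_le_of_eigen hX (abs_nonneg _) hj
  have hPQ : sP * X + X * sQ = P - Q := by
    have h1 : sP * (sP - sQ) + (sP - sQ) * sQ = sP * sP - sQ * sQ := by noncomm_ring
    rw [hX_def, h1, hsP2, hsQ2]
  have hXv : (toEuclideanCLM (𝕜 := ℝ) X) v = lam • v := clm_eigen hX j
  have key : ⟪v, (toEuclideanCLM (𝕜 := ℝ) (P - Q)) v⟫
      = lam * (⟪v, (toEuclideanCLM (𝕜 := ℝ) sP) v⟫
        + ⟪v, (toEuclideanCLM (𝕜 := ℝ) sQ) v⟫) := by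
    rw [← hPQ, map_add, _root_.map_mul, _root_.map_mul, ContinuousLinearMap.add_apply,
      ContinuousLinearMap.mul_apply, ContinuousLinearMap.mul_apply, hXv, _root_.map_smul,
      inner_add_right, real_inner_smul_right, ← sym_inner hX v _, hXv, real_inner_smul_left]
    ring
  have hsum : a + b ≤ ⟪v, (toEuclideanCLM (𝕜 := ℝ) sP) v⟫
      + ⟪v, (toEuclideanCLM (𝕜 := ℝ) sQ) v⟫ :=
    add_le_add (sqrt_min_le hP hsP hsP2 v hv) (sqrt_min_le hQ hsQ hsQ2 v hv)
  have hs : 0 < ⟪v, (toEuclideanCLM (𝕜 := ℝ) sP) v⟫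
      + ⟪v, (toEuclideanCLM (𝕜 := ℝ) sQ) v⟫ := lt_of_lt_of_le hab hsum
  calc ‖X‖ * (a + b) ≤ |lam| * (a + b) := mul_le_mul_of_nonneg_right hXnorm hab.le
  _ ≤ |lam| * (⟪v, (toEuclideanCLM (𝕜 := ℝ) sP) v⟫
        + ⟪v, (toEuclideanCLM (𝕜 := ℝ) sQ) v⟫) :=
      mul_le_mul_of_nonneg_left hsum (abs_nonneg _)
  _ = |⟪v, (toEuclideanCLM (𝕜 := ℝ) (P - Q)) v⟫| := by
      rw [key, abs_mul, abs_of_pos hs]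
  _ ≤ ‖v‖ * ‖(toEuclideanCLM (𝕜 := ℝ) (P - Q)) v‖ := abs_real_inner_le_norm _ _
  _ ≤ ‖v‖ * (‖toEuclideanCLM (𝕜 := ℝ) (P - Q)‖ * ‖v‖) :=
      mul_le_mul_of_nonneg_left (ContinuousLinearMap.le_opNorm _ _) (norm_nonneg _)
  _ = ‖P - Q‖ := by rw [hv, ← Matrix.cstar_norm_def]; ring
end

section
/- Let X^h_t(x) be a Gaussian random vector in ℝ^r with mean e^{Ft}x and covariance P_t, where F is a real r×r matrix, P_t = P∞ − e^{Ft}P∞e^{Fᵀt} for a positive definite P∞ satisfying P∞e^{Fᵀt} = e^{Ft}P∞ for all t ≥ 0. Define E_t = P∞^{−1/2} e^{Ft} P∞^{1/2} and assume E_t is symmetric. Then for all u, x ∈ ℝ^r: E[exp(uᵀP∞^{−1/2}X^h_t(x) − (1/2)uᵀu)] = exp((E_t u)ᵀ P∞^{−1/2}x − (1/2)(E_t u)ᵀ(E_t u)). -/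
open Matrix MeasureTheory

/-- the exponential-moment (Hermite generating function) identity
for the Gaussian random vector `X^h_t(x)` with mean `e^{Ft}x` and covariance
`P_t = Pinf − e^{Ft}Pinfe^{Fᵀt}`. The law `μ` of `X^h_t(x)` is specified through its
moment generating function, and `N = Pinf^{−1/2}`, `E_t = Pinf^{−1/2}e^{Ft}Pinf^{1/2}`. -/
theorem hermite_generating_identity {r : ℕ} (F Pinf N : Matrix (Fin r) (Fin r) ℝ)
    (t : ℝ) (ht : 0 ≤ t) (x : Fin r → ℝ)
    (hPinf : Pinf.PosDef) (hN : N.PosDef) (hN2 : N * N = Pinf⁻¹)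
    (hcomm : ∀ s : ℝ, 0 ≤ s →
      Pinf * NormedSpace.exp (s • Fᵀ) = NormedSpace.exp (s • F) * Pinf)
    (Pt : Matrix (Fin r) (Fin r) ℝ)
    (hPt : Pt = Pinf - NormedSpace.exp (t • F) * Pinf * NormedSpace.exp (t • Fᵀ))
    (Et : Matrix (Fin r) (Fin r) ℝ)
    (hEt : Et = N * NormedSpace.exp (t • F) * N⁻¹)
    (hEtsymm : Etᵀ = Et)
    (μ : Measure (Fin r → ℝ)) [IsProbabilityMeasure μ]
    (hmgf : ∀ v : Fin r → ℝ,
      (∫ y, Real.exp (v ⬝ᵥ y) ∂μ)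
        = Real.exp (v ⬝ᵥ (NormedSpace.exp (t • F)).mulVec x
            + (1 / 2) * (v ⬝ᵥ Pt.mulVec v))) :
    ∀ u : Fin r → ℝ,
      (∫ y, Real.exp (u ⬝ᵥ N.mulVec y - (1 / 2) * (u ⬝ᵥ u)) ∂μ)
        = Real.exp ((Et.mulVec u) ⬝ᵥ N.mulVec x
            - (1 / 2) * ((Et.mulVec u) ⬝ᵥ Et.mulVec u)) := by
  intro u
  set e := NormedSpace.exp (t • F) with he
  have hNu : IsUnit N.det := isUnit_iff_ne_zero.2 hN.det_pos.ne'
  have hPu : IsUnit Pinf.det := isUnit_iff_ne_zero.2 hPinf.det_pos.ne'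
  have hNN : N * N⁻¹ = 1 := Matrix.mul_nonsing_inv N hNu
  have hNN' : N⁻¹ * N = 1 := Matrix.nonsing_inv_mul N hNu
  have hPinf_eq : Pinf = N⁻¹ * N⁻¹ := by
    rw [← Matrix.mul_inv_rev, hN2, Matrix.nonsing_inv_nonsing_inv Pinf hPu]
  have hNP : N * Pinf = N⁻¹ := by
    rw [hPinf_eq, ← Matrix.mul_assoc, hNN, Matrix.one_mul]
  have hPN : Pinf * N = N⁻¹ := by
    rw [hPinf_eq, Matrix.mul_assoc, hNN', Matrix.mul_one]
  have hNsym : Nᵀ = N := by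
    have := hN.isHermitian
    simpa [Matrix.IsSymm] using this
  have hEN : Et * N = N * e := by
    rw [hEt, Matrix.mul_assoc, hNN', Matrix.mul_one]
  have hEE : Et * Et = N * e * e * N⁻¹ := by
    rw [hEt]
    calc N * e * N⁻¹ * (N * e * N⁻¹) = N * e * (N⁻¹ * N) * e * N⁻¹ := by noncomm_ring
      _ = N * e * e * N⁻¹ := by rw [hNN', Matrix.mul_one]
  have hP2 : e * Pinf * NormedSpace.exp (t • Fᵀ) = e * e * Pinf := by
    rw [Matrix.mul_assoc, hcomm t ht, ← he, ← Matrix.mul_assoc]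
  have hkey : N * Pt * N = 1 - Et * Et := by
    rw [hPt, hP2, hEE]
    rw [Matrix.mul_sub, Matrix.sub_mul]
    congr 1
    · rw [Matrix.mul_assoc, hPN, hNN]
    · calc N * (e * e * Pinf) * N = N * e * e * (Pinf * N) := by noncomm_ring
        _ = N * e * e * N⁻¹ := by rw [hPN]
  have hv : u ᵥ* N = N *ᵥ u := by
    conv_lhs => rw [← hNsym]
    rw [Matrix.vecMul_transpose]
  have hvE : u ᵥ* Et = Et *ᵥ u := by
    conv_lhs => rw [← hEtsymm]
    rw [Matrix.vecMul_transpose]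
  have hdot : ∀ y, u ⬝ᵥ N *ᵥ y = (N *ᵥ u) ⬝ᵥ y := by
    intro y
    rw [Matrix.dotProduct_mulVec, hv]
  have f1 : (N *ᵥ u) ⬝ᵥ e *ᵥ x = (Et *ᵥ u) ⬝ᵥ N *ᵥ x := by
    rw [← hv, ← Matrix.dotProduct_mulVec, Matrix.mulVec_mulVec,
        ← hvE, ← Matrix.dotProduct_mulVec, Matrix.mulVec_mulVec, hEN]
  have f2 : (N *ᵥ u) ⬝ᵥ Pt *ᵥ (N *ᵥ u) = u ⬝ᵥ u - (Et *ᵥ u) ⬝ᵥ Et *ᵥ u := by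
    rw [Matrix.mulVec_mulVec, ← hv, ← Matrix.dotProduct_mulVec, Matrix.mulVec_mulVec,
        ← Matrix.mul_assoc, hkey, Matrix.sub_mulVec, dotProduct_sub, Matrix.one_mulVec]
    congr 1
    rw [← Matrix.mulVec_mulVec, Matrix.dotProduct_mulVec, hvE]
  calc (∫ y, Real.exp (u ⬝ᵥ N *ᵥ y - (1 / 2) * (u ⬝ᵥ u)) ∂μ)
      = (∫ y, Real.exp ((N *ᵥ u) ⬝ᵥ y) ∂μ) / Real.exp ((1 / 2) * (u ⬝ᵥ u)) := by
        simp_rw [Real.exp_sub, hdot]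
        exact integral_div _ _
    _ = Real.exp ((Et *ᵥ u) ⬝ᵥ N *ᵥ x - (1 / 2) * ((Et *ᵥ u) ⬝ᵥ Et *ᵥ u)) := by
        rw [hmgf (N *ᵥ u), ← Real.exp_sub]
        congr 1
        rw [f1, f2]
        ring
end
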